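/- arXiv:1412.8241 — 3 statements merged into one kernel-verified Lean document; each statement's English description precedes it below -/
import Mathlib

section
/- Fix R > 0. There exists a constant C₁ = C₁(N, R, s) > 0 such that ∫_{B_R} ( ∫_{B_{2R} \ B_R} (|x| − R)² / |x − y|^{N+2s} dx ) dy ≤ C₁; in particular this double integral is finite for every s ∈ (0,1). -/
open MeasureTheory Filter Topology ENNReal

noncomputable section

abbrev Euc (N : ℕ) := EuclideanSpace ℝ (Fin N)

/-- Squared Gagliardo seminorm `[u]²` as an extended nonnegative real. -/
def gagliardoSq (N : ℕ) (s : ℝ) (u : Euc N → ℝ) : ℝ≥0∞ :=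
  ∫⁻ x : Euc N, ∫⁻ y : Euc N, ENNReal.ofReal (|u x - u y| ^ 2 / ‖x - y‖ ^ ((N : ℝ) + 2 * s))

/-- Gagliardo seminorm `[u]`. -/
def gagliardoNorm (N : ℕ) (s : ℝ) (u : Euc N → ℝ) : ℝ :=
  Real.sqrt (gagliardoSq N s u).toReal

/-- Membership in `X^s_0(Ω)`. -/
def memX (N : ℕ) (s : ℝ) (Ω : Set (Euc N)) (u : Euc N → ℝ) : Prop :=
  MemLp u 2 (volume : Measure (Euc N)) ∧ gagliardoSq N s u < ⊤ ∧
    ∀ᵐ x : Euc N, x ∉ Ω → u x = 0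

/-- The `L^∞(Ω)` norm as an extended nonnegative real. -/
def linfty (N : ℕ) (Ω : Set (Euc N)) (u : Euc N → ℝ) : ℝ≥0∞ :=
  eLpNorm u ⊤ ((volume : Measure (Euc N)).restrict Ω)

/-- `u` is a weak solution of `(−Δ)^s u = h(u)` in `Ω`, `u = 0` outside `Ω`. -/
def isWeakSolution (N : ℕ) (s : ℝ) (Ω : Set (Euc N)) (h : ℝ → ℝ) (u : Euc N → ℝ) : Prop :=
  memX N s Ω u ∧
  ∀ φ : Euc N → ℝ, memX N s Ω φ →
    Integrable (fun p : Euc N × Euc N =>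
        (u p.1 - u p.2) * (φ p.1 - φ p.2) / ‖p.1 - p.2‖ ^ ((N : ℝ) + 2 * s))
      ((volume : Measure (Euc N)).prod volume) ∧
    IntegrableOn (fun x => h (u x) * φ x) Ω volume ∧
    (∫ p : Euc N × Euc N,
        (u p.1 - u p.2) * (φ p.1 - φ p.2) / ‖p.1 - p.2‖ ^ ((N : ℝ) + 2 * s)
        ∂((volume : Measure (Euc N)).prod volume))
      = ∫ x in Ω, h (u x) * φ x

/-- `F(t) = ∫₀^t f`. -/
def primitive (f : ℝ → ℝ) (t : ℝ) : ℝ := ∫ τ in (0:ℝ)..t, f τ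

open Set Metric in
lemma key_finite (N : ℕ) (hN : 0 < N) (α ρ : ℝ) (hα : α < N) (hρ : 0 < ρ) :
    (∫⁻ x : Euc N in Metric.ball 0 ρ, ENNReal.ofReal (‖x‖ ^ (-α))) < ⊤ := by
  have hdim : Module.finrank ℝ (Euc N) = N := by simp
  rcases le_or_gt α 0 with hα0 | hα0
  · have hb : ∀ x ∈ Metric.ball (0 : Euc N) ρ,
        ENNReal.ofReal (‖x‖ ^ (-α)) ≤ ENNReal.ofReal (ρ ^ (-α)) := by
      intro x hx
      apply ENNReal.ofReal_le_ofReal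
      exact Real.rpow_le_rpow (norm_nonneg x) (mem_ball_zero_iff.1 hx).le (neg_nonneg.2 hα0)
    calc (∫⁻ x : Euc N in Metric.ball 0 ρ, ENNReal.ofReal (‖x‖ ^ (-α)))
        ≤ ∫⁻ _x : Euc N in Metric.ball 0 ρ, ENNReal.ofReal (ρ ^ (-α)) :=
          setLIntegral_mono' measurableSet_ball hb
      _ = ENNReal.ofReal (ρ ^ (-α)) * volume (Metric.ball (0 : Euc N) ρ) := by
          rw [setLIntegral_const]
      _ < ⊤ := ENNReal.mul_lt_top ENNReal.ofReal_lt_top measure_ball_lt_top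
  · set μ := (volume : Measure (Euc N)).restrict (Metric.ball 0 ρ) with hμ
    have h_meas : Measurable fun x : Euc N => ‖x‖ ^ (-α) := by fun_prop
    have h_nn : 0 ≤ᵐ[μ] fun x : Euc N => ‖x‖ ^ (-α) :=
      Filter.Eventually.of_forall fun x => Real.rpow_nonneg (norm_nonneg x) _
    have hlc : (∫⁻ x, ENNReal.ofReal (‖x‖ ^ (-α)) ∂μ)
        = ∫⁻ t in Ioi (0:ℝ), μ {a : Euc N | t ≤ ‖a‖ ^ (-α)} :=
      lintegral_eq_lintegral_meas_le μ h_nn h_meas.aemeasurable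
    rw [hμ] at hlc
    rw [hlc]
    set T : ℝ := ρ ^ (-α) with hT
    have hTpos : 0 < T := Real.rpow_pos_of_pos hρ _
    have hsub : ∀ t : ℝ, 0 < t → {a : Euc N | t ≤ ‖a‖ ^ (-α)} ⊆
        Metric.closedBall 0 (t ^ (-α⁻¹)) := by
      intro t ht a ha
      simp only [mem_setOf_eq] at ha
      rcases eq_or_ne a 0 with rfl | ha0
      · simp only [norm_zero] at ha
        rw [Real.zero_rpow (neg_ne_zero.2 hα0.ne')] at ha
        exact absurd ha (not_le.2 ht)
      · have hna : 0 < ‖a‖ := norm_pos_iff.2 ha0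
        rw [Metric.mem_closedBall, dist_zero_right]
        calc ‖a‖ = (‖a‖ ^ (-α)) ^ (-α⁻¹) := by
              rw [← Real.rpow_mul hna.le]
              simp [hα0.ne']
          _ ≤ t ^ (-α⁻¹) :=
              Real.rpow_le_rpow_of_nonpos ht ha
                (neg_nonpos.2 (inv_nonneg.2 hα0.le))
    set f : ℝ → ℝ≥0∞ :=
      fun t => (volume : Measure (Euc N)).restrict (Metric.ball 0 ρ)
        {a : Euc N | t ≤ ‖a‖ ^ (-α)} with hf
    calc (∫⁻ t in Ioi (0:ℝ), f t)
        = ∫⁻ t in Ioc (0:ℝ) T ∪ Ioi T, f t := by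
          rw [Ioc_union_Ioi_eq_Ioi hTpos.le]
      _ ≤ (∫⁻ t in Ioc (0:ℝ) T, f t) + ∫⁻ t in Ioi T, f t := lintegral_union_le _ _ _
      _ < ⊤ := by
          apply ENNReal.add_lt_top.2
          constructor
          · have hb : ∀ t ∈ Ioc (0:ℝ) T, f t ≤ volume (Metric.ball (0 : Euc N) ρ) := by
              intro t _
              rw [hf]
              simp only
              rw [Measure.restrict_apply' measurableSet_ball]
              exact measure_mono inter_subset_right
            calc (∫⁻ t in Ioc (0:ℝ) T, f t)
                ≤ ∫⁻ _t in Ioc (0:ℝ) T, volume (Metric.ball (0 : Euc N) ρ) :=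
                  setLIntegral_mono' measurableSet_Ioc hb
              _ = volume (Metric.ball (0 : Euc N) ρ) * volume (Ioc (0:ℝ) T) := by
                  rw [setLIntegral_const]
              _ < ⊤ := ENNReal.mul_lt_top measure_ball_lt_top (by simp)
          · have hb : ∀ t ∈ Ioi T, f t ≤
                ENNReal.ofReal (t ^ (-α⁻¹ * N)) * volume (Metric.ball (0 : Euc N) 1) := by
              intro t ht
              have ht0 : 0 < t := hTpos.trans ht
              have h1 : f t ≤ volume (Metric.closedBall (0 : Euc N) (t ^ (-α⁻¹))) := by
                rw [hf]
                simp only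
                rw [Measure.restrict_apply' measurableSet_ball]
                exact measure_mono (inter_subset_left.trans (hsub t ht0))
              refine h1.trans_eq ?_
              rw [Measure.addHaar_closedBall _ _ (Real.rpow_nonneg ht0.le _), hdim,
                ← Real.rpow_natCast (t ^ (-α⁻¹)) N, ← Real.rpow_mul ht0.le]
            calc (∫⁻ t in Ioi T, f t)
                ≤ ∫⁻ t in Ioi T,
                    ENNReal.ofReal (t ^ (-α⁻¹ * N)) * volume (Metric.ball (0 : Euc N) 1) :=
                  setLIntegral_mono' measurableSet_Ioi hb
              _ = (∫⁻ t in Ioi T, ENNReal.ofReal (t ^ (-α⁻¹ * N))) *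
                    volume (Metric.ball (0 : Euc N) 1) :=
                  lintegral_mul_const' _ _ measure_ball_lt_top.ne
              _ < ⊤ := by
                  apply ENNReal.mul_lt_top _ measure_ball_lt_top
                  apply IntegrableOn.setLIntegral_lt_top
                  apply integrableOn_Ioi_rpow_of_lt _ hTpos
                  rw [neg_mul, neg_lt_neg_iff, ← div_eq_inv_mul]
                  exact (one_lt_div hα0).2 hα

end

open Set Metric in
/-- Estimate `I` in Lemma 3.1:
`∫_{B_R} ∫_{B_{2R}∖B_R} (|x|−R)²/|x−y|^{N+2s} dx dy ≤ C₁(N,R,s)`. -/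
theorem statement10
    (N : ℕ) (s R : ℝ) (hN : 0 < N) (hs0 : 0 < s) (hs1 : s < 1) (hR : 0 < R) :
    ∃ C₁ : ℝ, 0 < C₁ ∧
      (∫⁻ y in Metric.ball (0 : Euc N) R,
        ∫⁻ x in Metric.ball (0 : Euc N) (2 * R) \ Metric.ball (0 : Euc N) R,
          ENNReal.ofReal ((‖x‖ - R) ^ 2 / ‖x - y‖ ^ ((N : ℝ) + 2 * s)))
        ≤ ENNReal.ofReal C₁ := by
  set α : ℝ := (N : ℝ) + 2 * s - 2 with hα
  have hαN : α < (N : ℝ) := by simp only [hα]; linarith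
  have h3R : (0:ℝ) < 3 * R := by linarith
  have hI := key_finite N hN α (3 * R) hαN h3R
  set I := ∫⁻ x : Euc N in Metric.ball 0 (3 * R), ENNReal.ofReal (‖x‖ ^ (-α)) with hIdef
  set A := Metric.ball (0 : Euc N) (2 * R) \ Metric.ball (0 : Euc N) R with hA
  have hAmeas : MeasurableSet A := measurableSet_ball.diff measurableSet_ball
  have hinner : ∀ y ∈ Metric.ball (0 : Euc N) R,
      (∫⁻ x in A, ENNReal.ofReal ((‖x‖ - R) ^ 2 / ‖x - y‖ ^ ((N : ℝ) + 2 * s))) ≤ I := by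
    intro y hy
    have hy' : ‖y‖ < R := mem_ball_zero_iff.1 hy
    have step1 : (∫⁻ x in A, ENNReal.ofReal ((‖x‖ - R) ^ 2 / ‖x - y‖ ^ ((N : ℝ) + 2 * s)))
        ≤ ∫⁻ x in A, ENNReal.ofReal (‖x - y‖ ^ (-α)) := by
      apply setLIntegral_mono' hAmeas
      intro x hx
      have hx1 : ‖x‖ < 2 * R := mem_ball_zero_iff.1 hx.1
      have hx2 : R ≤ ‖x‖ := by
        have := hx.2
        rw [mem_ball_zero_iff] at this
        exact not_lt.1 this
      have h2 : 0 ≤ ‖x‖ - R := by linarith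
      have h1 : ‖x‖ - R ≤ ‖x - y‖ := by
        have := norm_sub_norm_le x y
        linarith
      have hd : 0 < ‖x - y‖ := by
        have := norm_sub_norm_le x y
        linarith
      apply ENNReal.ofReal_le_ofReal
      have hnum : (‖x‖ - R) ^ 2 ≤ ‖x - y‖ ^ 2 := by
        apply pow_le_pow_left₀ h2 h1
      calc (‖x‖ - R) ^ 2 / ‖x - y‖ ^ ((N : ℝ) + 2 * s)
          ≤ ‖x - y‖ ^ 2 / ‖x - y‖ ^ ((N : ℝ) + 2 * s) := by
            gcongr
        _ = ‖x - y‖ ^ (-α) := by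
            rw [hα, show -((N : ℝ) + 2 * s - 2) = 2 - ((N : ℝ) + 2 * s) by ring,
              Real.rpow_sub hd, Real.rpow_two]
    have step2 : (∫⁻ x in A, ENNReal.ofReal (‖x - y‖ ^ (-α)))
        ≤ ∫⁻ x in Metric.ball y (3 * R), ENNReal.ofReal (‖x - y‖ ^ (-α)) := by
      apply lintegral_mono_set
      intro x hx
      have hx1 : ‖x‖ < 2 * R := mem_ball_zero_iff.1 hx.1
      rw [Metric.mem_ball, dist_eq_norm]
      calc ‖x - y‖ ≤ ‖x‖ + ‖y‖ := norm_sub_le x y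
        _ < 3 * R := by linarith
    have step3 : (∫⁻ x in Metric.ball y (3 * R), ENNReal.ofReal (‖x - y‖ ^ (-α))) = I := by
      have hmp := measurePreserving_add_right (volume : Measure (Euc N)) y
      have hemb := (MeasurableEquiv.addRight y).measurableEmbedding
      have := hmp.setLIntegral_comp_preimage_emb hemb
        (fun x => ENNReal.ofReal (‖x - y‖ ^ (-α))) (Metric.ball y (3 * R))
      rw [← this]
      have hpre : (fun a : Euc N => a + y) ⁻¹' Metric.ball y (3 * R)
          = Metric.ball 0 (3 * R) := by
        ext a
        simp [Metric.mem_ball, dist_eq_norm]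
      rw [hIdef]
      rw [hpre]
      apply setLIntegral_congr_fun measurableSet_ball
      intro a _
      simp
    exact step1.trans (step2.trans step3.le)
  set D := (∫⁻ y in Metric.ball (0 : Euc N) R,
      ∫⁻ x in A, ENNReal.ofReal ((‖x‖ - R) ^ 2 / ‖x - y‖ ^ ((N : ℝ) + 2 * s))) with hD
  have hDlt : D < ⊤ := by
    calc D ≤ ∫⁻ _y in Metric.ball (0 : Euc N) R, I :=
          setLIntegral_mono' measurableSet_ball hinner
      _ = I * volume (Metric.ball (0 : Euc N) R) := setLIntegral_const _ _
      _ < ⊤ := ENNReal.mul_lt_top hI measure_ball_lt_top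
  refine ⟨D.toReal + 1, by positivity, ?_⟩
  calc D = ENNReal.ofReal D.toReal := (ENNReal.ofReal_toReal hDlt.ne).symm
    _ ≤ ENNReal.ofReal (D.toReal + 1) := ENNReal.ofReal_le_ofReal (by linarith)
end

section
/- Let α, β, a be real numbers with 0 < α < 1 < α + β and 0 < a < 1, and define f : [0,∞) → ℝ by f(0) = 0 and f(t) = t^α (a + sin(1/t^β)) for t > 0. Then f is continuous on [0,∞), and with F(t) = ∫₀^t f(τ) dτ one has: −∞ < liminf_{t→0⁺} F(t)/t², limsup_{t→0⁺} F(t)/t² = +∞, and liminf_{t→0⁺} f(t)/t < 0; that is, f satisfies condition (f₀). -/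
open MeasureTheory Filter Topology ENNReal

noncomputable section

lemma aux_zero {p : ℝ} (hp : 0 < p) {q : ℝ} (g : ℝ → ℝ) (hbd : ∀ x, |g x| ≤ 2) :
    Tendsto (fun τ : ℝ => if 0 < τ then τ ^ p * g (1 / τ ^ q) else 0) (𝓝[Set.Ici 0] 0) (𝓝 0) := by
  apply squeeze_zero_norm' (a := fun τ : ℝ => 2 * τ ^ p)
  · filter_upwards [self_mem_nhdsWithin] with τ (hτ : (0:ℝ) ≤ τ)
    by_cases h : 0 < τ
    · simp only [if_pos h, Real.norm_eq_abs, abs_mul]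
      rw [abs_of_nonneg (Real.rpow_nonneg hτ p)]
      calc τ ^ p * |g (1 / τ ^ q)| ≤ τ ^ p * 2 :=
            mul_le_mul_of_nonneg_left (hbd _) (Real.rpow_nonneg hτ p)
        _ = 2 * τ ^ p := by ring
    · simp [if_neg h, mul_nonneg, Real.rpow_nonneg hτ p]
  · have : ContinuousAt (fun τ : ℝ => 2 * τ ^ p) 0 :=
      continuousAt_const.mul (Real.continuousAt_rpow_const 0 p (Or.inr hp.le))
    have h2 := this.continuousWithinAt (s := Set.Ici 0)
    rw [ContinuousWithinAt] at h2
    simpa [Real.zero_rpow hp.ne'] using h2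

lemma aux_cont {p : ℝ} (hp : 0 < p) (q : ℝ) (g : ℝ → ℝ) (hg : Continuous g)
    (hbd : ∀ x, |g x| ≤ 2) :
    ContinuousOn (fun τ : ℝ => if 0 < τ then τ ^ p * g (1 / τ ^ q) else 0) (Set.Ici (0:ℝ)) := by
  intro x hx
  rcases eq_or_lt_of_le (Set.mem_Ici.mp hx) with h0 | hpos
  · rw [ContinuousWithinAt, ← h0]
    simpa using aux_zero hp g hbd
  · apply ContinuousAt.continuousWithinAt
    have hform : ContinuousAt (fun τ : ℝ => τ ^ p * g (1 / τ ^ q)) x := by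
      apply ContinuousAt.mul (Real.continuousAt_rpow_const x p (Or.inl hpos.ne'))
      exact hg.continuousAt.comp ((continuousAt_const.div
        (Real.continuousAt_rpow_const x q (Or.inl hpos.ne'))
        (Real.rpow_pos_of_pos hpos q).ne'))
    apply hform.congr
    filter_upwards [eventually_gt_nhds hpos] with τ hτ
    rw [if_pos hτ]

lemma aux_deriv {α β : ℝ} (hβ : 0 < β) {τ : ℝ} (hτ : 0 < τ) :
    HasDerivAt (fun s : ℝ => (1/β) * s ^ (α+β+1) * Real.cos (1 / s ^ β))
      (((α+β+1)/β) * τ ^ (α+β) * Real.cos (1 / τ ^ β) + τ ^ α * Real.sin (1 / τ ^ β)) τ := by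
  have hτβ := Real.rpow_pos_of_pos hτ β
  have h2 : HasDerivAt (fun s : ℝ => s ^ β) (β * τ ^ (β-1)) τ :=
    Real.hasDerivAt_rpow_const (Or.inl hτ.ne')
  have h3 : HasDerivAt (fun s : ℝ => 1 / s ^ β) (-(β * τ^(β-1)) / (τ^β)^2) τ := by
    have := (hasDerivAt_const τ (1:ℝ)).div h2 hτβ.ne'
    simp only [zero_mul, one_mul, zero_sub] at this
    exact this
  have h4 : HasDerivAt (fun s : ℝ => Real.cos (1 / s ^ β))
      (Real.sin (1/τ^β) * (β*τ^(β-1)) / (τ^β)^2) τ := by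
    have := (Real.hasDerivAt_cos (1/τ^β)).comp τ h3
    refine this.congr_deriv ?_
    ring
  have h1 : HasDerivAt (fun s : ℝ => (1/β) * s ^ (α+β+1)) ((1/β) * ((α+β+1) * τ^(α+β))) τ := by
    have h := (Real.hasDerivAt_rpow_const (x := τ) (p := α+β+1) (Or.inl hτ.ne')).const_mul (1/β)
    have e : α + β + 1 - 1 = α + β := by ring
    rw [e] at h
    exact h
  have key : τ^(α+β+1) * τ^(β-1) = τ^α * (τ^β)^2 := by
    rw [sq, ← Real.rpow_add hτ, ← Real.rpow_add hτ, ← Real.rpow_add hτ]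
    congr 1
    ring
  have := h1.mul h4
  refine this.congr_deriv ?_
  symm
  field_simp
  linear_combination (-(β * Real.sin (1/τ^β))) * key

lemma aux_ftc {α β : ℝ} (hα0 : 0 < α) (hβ : 0 < β) {t : ℝ} (ht : 0 < t) :
    (∫ τ in (0:ℝ)..t, ((if 0 < τ then τ ^ α * Real.sin (1/τ^β) else 0)
        + ((α+β+1)/β) * (if 0 < τ then τ ^ (α+β) * Real.cos (1/τ^β) else 0)))
      = (1/β) * t^(α+β+1) * Real.cos (1/t^β) := by
  have hbd : ∀ x, |Real.cos x| ≤ 2 := fun x => (Real.abs_cos_le_one x).trans one_le_two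
  have hbds : ∀ x, |Real.sin x| ≤ 2 := fun x => (Real.abs_sin_le_one x).trans one_le_two
  have hsub : Set.Icc (0:ℝ) t ⊆ Set.Ici 0 := Set.Icc_subset_Ici_self
  set HH : ℝ → ℝ := fun τ => (1/β) * (if 0 < τ then τ^(α+β+1) * Real.cos (1/τ^β) else 0)
    with hHHdef
  have hcont : ContinuousOn HH (Set.Icc 0 t) :=
    continuousOn_const.mul
      ((aux_cont (by positivity) β Real.cos Real.continuous_cos hbd).mono hsub)
  have hint : IntervalIntegrable (fun τ : ℝ => ((if 0 < τ then τ ^ α * Real.sin (1/τ^β) else 0)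
        + ((α+β+1)/β) * (if 0 < τ then τ ^ (α+β) * Real.cos (1/τ^β) else 0))) volume 0 t := by
    apply ContinuousOn.intervalIntegrable
    rw [Set.uIcc_of_le ht.le]
    exact ((aux_cont hα0 β Real.sin Real.continuous_sin hbds).mono hsub).add
      (continuousOn_const.mul
        ((aux_cont (p := α+β) (by positivity) β Real.cos Real.continuous_cos hbd).mono hsub))
  have hderiv : ∀ τ ∈ Set.Ioo (0:ℝ) t,
      HasDerivWithinAt HH ((if 0 < τ then τ ^ α * Real.sin (1/τ^β) else 0)
        + ((α+β+1)/β) * (if 0 < τ then τ ^ (α+β) * Real.cos (1/τ^β) else 0)) (Set.Ioi τ) τ := by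
    intro τ hτ
    have hd := aux_deriv (α := α) hβ hτ.1
    have heq : HH =ᶠ[𝓝 τ] (fun s => (1/β) * s^(α+β+1) * Real.cos (1/s^β)) := by
      filter_upwards [eventually_gt_nhds hτ.1] with s hs
      simp only [hHHdef, if_pos hs]
      ring
    have hd2 := hd.congr_of_eventuallyEq heq
    have : HasDerivAt HH ((if 0 < τ then τ ^ α * Real.sin (1/τ^β) else 0)
        + ((α+β+1)/β) * (if 0 < τ then τ ^ (α+β) * Real.cos (1/τ^β) else 0)) τ := by
      refine hd2.congr_deriv ?_
      simp only [if_pos hτ.1]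
      ring
    exact this.hasDerivWithinAt
  have hres := intervalIntegral.integral_eq_sub_of_hasDeriv_right_of_le ht.le hcont hderiv hint
  rw [hres]
  simp only [hHHdef, if_pos ht, if_neg (lt_irrefl (0:ℝ))]
  ring

lemma aux_bound {α β : ℝ} (hα0 : 0 < α) (hβ : 0 < β) {t : ℝ} (ht : 0 < t) :
    |∫ τ in (0:ℝ)..t, (if 0 < τ then τ ^ α * Real.sin (1/τ^β) else 0)| ≤ (2/β) * t^(α+β+1) := by
  have hbd : ∀ x, |Real.cos x| ≤ 2 := fun x => (Real.abs_cos_le_one x).trans one_le_two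
  have hbds : ∀ x, |Real.sin x| ≤ 2 := fun x => (Real.abs_sin_le_one x).trans one_le_two
  have hsub : Set.Icc (0:ℝ) t ⊆ Set.Ici 0 := Set.Icc_subset_Ici_self
  have hintS : IntervalIntegrable
      (fun τ : ℝ => (if 0 < τ then τ ^ α * Real.sin (1/τ^β) else 0)) volume 0 t := by
    apply ContinuousOn.intervalIntegrable
    rw [Set.uIcc_of_le ht.le]
    exact (aux_cont hα0 β Real.sin Real.continuous_sin hbds).mono hsub
  have hintC : IntervalIntegrable
      (fun τ : ℝ => (if 0 < τ then τ ^ (α+β) * Real.cos (1/τ^β) else 0)) volume 0 t := by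
    apply ContinuousOn.intervalIntegrable
    rw [Set.uIcc_of_le ht.le]
    exact (aux_cont (p := α+β) (by positivity) β Real.cos Real.continuous_cos hbd).mono hsub
  have hsplit := intervalIntegral.integral_add hintS (hintC.const_mul (((α:ℝ)+β+1)/β))
  rw [aux_ftc hα0 hβ ht] at hsplit
  rw [intervalIntegral.integral_const_mul] at hsplit
  -- bound on cos integral
  have hboundC : |∫ τ in (0:ℝ)..t, (if 0 < τ then τ ^ (α+β) * Real.cos (1/τ^β) else 0)|
      ≤ t^(α+β+1) / (α+β+1) := by
    have h1 := intervalIntegral.abs_integral_le_integral_abs (a := 0) (b := t)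
      (f := fun τ : ℝ => (if 0 < τ then τ ^ (α+β) * Real.cos (1/τ^β) else 0)) (μ := volume) ht.le
    have h2 : (∫ τ in (0:ℝ)..t, |if 0 < τ then τ ^ (α+β) * Real.cos (1/τ^β) else 0|)
        ≤ ∫ τ in (0:ℝ)..t, τ ^ (α+β) := by
      apply intervalIntegral.integral_mono_on ht.le hintC.abs
        (intervalIntegral.intervalIntegrable_rpow' (by linarith))
      intro τ hτ
      by_cases h : 0 < τ
      · rw [if_pos h, abs_mul, abs_of_nonneg (Real.rpow_nonneg h.le _)]
        calc τ ^ (α+β) * |Real.cos (1/τ^β)| ≤ τ ^ (α+β) * 1 :=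
              mul_le_mul_of_nonneg_left (Real.abs_cos_le_one _) (Real.rpow_nonneg h.le _)
          _ = τ ^ (α+β) := mul_one _
      · rw [if_neg h]
        simpa using Real.rpow_nonneg hτ.1 (α+β)
    have h3 : (∫ τ in (0:ℝ)..t, τ ^ (α+β)) = t^(α+β+1)/(α+β+1) := by
      rw [integral_rpow (Or.inl (by linarith))]
      rw [Real.zero_rpow (by positivity : (α+β+1) ≠ 0)]
      ring
    rw [h3] at h2
    exact h1.trans h2
  have hS : (∫ τ in (0:ℝ)..t, (if 0 < τ then τ ^ α * Real.sin (1/τ^β) else 0))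
      = (1/β) * t^(α+β+1) * Real.cos (1/t^β)
        - ((α+β+1)/β) * ∫ τ in (0:ℝ)..t, (if 0 < τ then τ ^ (α+β) * Real.cos (1/τ^β) else 0) := by
    linarith [hsplit]
  rw [hS]
  have e1 : |(1/β) * t^(α+β+1) * Real.cos (1/t^β)| ≤ (1/β) * t^(α+β+1) := by
    rw [abs_mul, abs_mul]
    rw [abs_of_nonneg (by positivity : (0:ℝ) ≤ 1/β),
      abs_of_nonneg (Real.rpow_nonneg ht.le _)]
    calc 1/β * t^(α+β+1) * |Real.cos (1/t^β)| ≤ 1/β * t^(α+β+1) * 1 := by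
          apply mul_le_mul_of_nonneg_left (Real.abs_cos_le_one _); positivity
      _ = 1/β * t^(α+β+1) := mul_one _
  have e2 : |((α+β+1)/β) * ∫ τ in (0:ℝ)..t, (if 0 < τ then τ ^ (α+β) * Real.cos (1/τ^β) else 0)|
      ≤ (1/β) * t^(α+β+1) := by
    rw [abs_mul, abs_of_nonneg (by positivity : (0:ℝ) ≤ (α+β+1)/β)]
    calc (α+β+1)/β * |∫ τ in (0:ℝ)..t, (if 0 < τ then τ ^ (α+β) * Real.cos (1/τ^β) else 0)|
        ≤ (α+β+1)/β * (t^(α+β+1)/(α+β+1)) := by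
          apply mul_le_mul_of_nonneg_left hboundC; positivity
      _ = (1/β) * t^(α+β+1) := by field_simp
  calc |(1/β) * t^(α+β+1) * Real.cos (1/t^β)
        - ((α+β+1)/β) * ∫ τ in (0:ℝ)..t, (if 0 < τ then τ ^ (α+β) * Real.cos (1/τ^β) else 0)|
      ≤ |(1/β) * t^(α+β+1) * Real.cos (1/t^β)|
        + |((α+β+1)/β) * ∫ τ in (0:ℝ)..t, (if 0 < τ then τ ^ (α+β) * Real.cos (1/τ^β) else 0)| :=
        abs_sub _ _
    _ ≤ (1/β) * t^(α+β+1) + (1/β) * t^(α+β+1) := add_le_add e1 e2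
    _ = (2/β) * t^(α+β+1) := by ring

/-- Remark 1.2(1): `f(t) = t^α (a + sin(1/t^β))` (and `f(0)=0`) satisfies `(f₀)`. -/
theorem statement15
    (α β a : ℝ) (hα0 : 0 < α) (hα1 : α < 1) (hαβ : 1 < α + β) (ha0 : 0 < a) (ha1 : a < 1)
    (f : ℝ → ℝ)
    (hf : ∀ t : ℝ, f t = if 0 < t then t ^ α * (a + Real.sin (1 / t ^ β)) else 0) :
    ContinuousOn f (Set.Ici (0:ℝ)) ∧
    (⊥ : EReal) <
      liminf (fun t : ℝ => ((primitive f t / t ^ 2 : ℝ) : EReal)) (𝓝[>] (0:ℝ)) ∧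
    limsup (fun t : ℝ => ((primitive f t / t ^ 2 : ℝ) : EReal)) (𝓝[>] (0:ℝ)) = ⊤ ∧
    liminf (fun t : ℝ => ((f t / t : ℝ) : EReal)) (𝓝[>] (0:ℝ)) < 0 := by
  have hβ : 0 < β := by linarith
  have hbds : ∀ x, |Real.sin x| ≤ 2 := fun x => (Real.abs_sin_le_one x).trans one_le_two
  have hgb : ∀ x, |a + Real.sin x| ≤ 2 := by
    intro x
    have h1 := Real.neg_one_le_sin x
    have h2 := Real.sin_le_one x
    rw [abs_le]; constructor <;> linarith
  have hfun : f = fun τ : ℝ => if 0 < τ then τ ^ α * (a + Real.sin (1 / τ ^ β)) else 0 :=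
    funext hf
  have hcont : ContinuousOn f (Set.Ici (0:ℝ)) := by
    rw [hfun]
    exact aux_cont hα0 β (fun x => a + Real.sin x) (continuous_const.add Real.continuous_sin) hgb
  set S : ℝ → ℝ := fun t => ∫ τ in (0:ℝ)..t, (if 0 < τ then τ ^ α * Real.sin (1/τ^β) else 0)
    with hSdef
  have hdecomp : ∀ t : ℝ, 0 < t → primitive f t = a * (t^(α+1)/(α+1)) + S t := by
    intro t ht
    have hintS : IntervalIntegrable
        (fun τ : ℝ => (if 0 < τ then τ ^ α * Real.sin (1/τ^β) else 0)) volume 0 t := by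
      apply ContinuousOn.intervalIntegrable
      rw [Set.uIcc_of_le ht.le]
      exact (aux_cont hα0 β Real.sin Real.continuous_sin hbds).mono Set.Icc_subset_Ici_self
    have hEq : Set.EqOn f
        (fun τ : ℝ => a * τ^α + (if 0 < τ then τ ^ α * Real.sin (1/τ^β) else 0))
        (Set.uIcc 0 t) := by
      intro τ hτ
      rw [Set.uIcc_of_le ht.le] at hτ
      rcases eq_or_lt_of_le hτ.1 with h0 | hpos
      · rw [← h0, hf]
        simp [Real.zero_rpow hα0.ne']
      · rw [hf, if_pos hpos]
        simp only [if_pos hpos]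
        ring
    unfold primitive
    rw [intervalIntegral.integral_congr hEq,
      intervalIntegral.integral_add
        ((intervalIntegral.intervalIntegrable_rpow' (by linarith)).const_mul a) hintS,
      intervalIntegral.integral_const_mul, integral_rpow (Or.inl (by linarith)),
      Real.zero_rpow (by positivity : α+1 ≠ 0)]
    rw [sub_zero]
  have hpos2 : 0 < a / (2*(α+1)) := by positivity
  have hTend : Tendsto (fun t => primitive f t / t^2) (𝓝[>] (0:ℝ)) atTop := by
    have h2 : Tendsto (fun t:ℝ => (2/β) * t^β) (𝓝[>] (0:ℝ)) (𝓝 0) := by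
      have hc : ContinuousWithinAt (fun t : ℝ => (2/β) * t^β) (Set.Ioi (0:ℝ)) 0 :=
        (continuousAt_const.mul
          (Real.continuousAt_rpow_const 0 β (Or.inr hβ.le))).continuousWithinAt
      rw [ContinuousWithinAt] at hc
      simpa [Real.zero_rpow hβ.ne'] using hc
    have hev1 : ∀ᶠ t in 𝓝[>] (0:ℝ), (2/β) * t^β < a/(2*(α+1)) :=
      h2.eventually_lt_const hpos2
    have hev : ∀ᶠ t in 𝓝[>] (0:ℝ), a/(2*(α+1)) * t^(α-1) ≤ primitive f t / t^2 := by
      filter_upwards [hev1, self_mem_nhdsWithin] with t hlt (ht : (0:ℝ) < t)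
      have htα := Real.rpow_pos_of_pos ht (α-1)
      have hS := aux_bound hα0 hβ ht
      have ht2 : (0:ℝ) < t^2 := by positivity
      have key1 : t^(α+1) = t^(α-1) * t^2 := by
        rw [show (t^2:ℝ) = t^((2:ℕ):ℝ) from (Real.rpow_natCast t 2).symm,
          ← Real.rpow_add ht]
        congr 1
        push_cast
        ring
      have key2 : t^(α+β+1) = t^β * t^(α-1) * t^2 := by
        rw [show (t^2:ℝ) = t^((2:ℕ):ℝ) from (Real.rpow_natCast t 2).symm,
          ← Real.rpow_add ht, ← Real.rpow_add ht]
        congr 1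
        push_cast
        ring
      have hSlow : -((2/β) * (t^β * t^(α-1) * t^2)) ≤ S t := by
        have h := (abs_le.mp hS).1
        rw [key2] at h
        linarith
      have hhalf : a/(2*(α+1)) = a/(α+1) - a/(2*(α+1)) := by
        field_simp
        ring
      calc a/(2*(α+1)) * t^(α-1) ≤ (a/(α+1) - (2/β)*t^β) * t^(α-1) := by
            apply mul_le_mul_of_nonneg_right _ htα.le
            linarith
        _ ≤ primitive f t / t^2 := by
            rw [hdecomp t ht, le_div_iff₀ ht2]
            have e : a * (t^(α+1)/(α+1)) = a/(α+1) * t^(α-1) * t^2 := by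
              rw [key1]; ring
            nlinarith [hSlow]
    have hA : Tendsto (fun t:ℝ => t^(α-1)) (𝓝[>] (0:ℝ)) atTop := by
      have h1 : Tendsto (fun t:ℝ => t^(1-α)) (𝓝[>] (0:ℝ)) (𝓝[>] (0:ℝ)) := by
        rw [tendsto_nhdsWithin_iff]
        constructor
        · have hc := (Real.continuousAt_rpow_const 0 (1-α)
            (Or.inr (by linarith))).continuousWithinAt (s := Set.Ioi (0:ℝ))
          rw [ContinuousWithinAt] at hc
          simpa [Real.zero_rpow (by linarith : (1-α) ≠ 0)] using hc
        · filter_upwards [self_mem_nhdsWithin] with t (ht : (0:ℝ) < t)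
          exact Real.rpow_pos_of_pos ht _
      have h2 := tendsto_inv_nhdsGT_zero.comp h1
      apply h2.congr'
      filter_upwards [self_mem_nhdsWithin] with t (ht : (0:ℝ) < t)
      show (t^(1-α))⁻¹ = t^(α-1)
      rw [← Real.rpow_neg ht.le]
      congr 1
      ring
    exact tendsto_atTop_mono' _ hev (Tendsto.const_mul_atTop hpos2 hA)
  have hTendE : Tendsto (fun t : ℝ => ((primitive f t / t ^ 2 : ℝ) : EReal))
      (𝓝[>] (0:ℝ)) (𝓝 ⊤) := by
    rw [EReal.tendsto_nhds_top_iff_real]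
    intro x
    filter_upwards [hTend.eventually (eventually_gt_atTop x)] with t ht
    exact_mod_cast ht
  have hlimsup := hTendE.limsup_eq
  have hliminf := hTendE.liminf_eq
  refine ⟨hcont, ?_, hlimsup, ?_⟩
  · rw [hliminf]; exact bot_lt_top
  · -- liminf f(t)/t < 0
    have hReal.pi := Real.pi_pos
    set u : ℕ → ℝ := fun n => (3*Real.pi/2 + (n:ℝ)*(2*Real.pi)) ^ (-(1/β)) with hu
    have hxpos : ∀ n : ℕ, (0:ℝ) < 3*Real.pi/2 + (n:ℝ)*(2*Real.pi) := by intro n; positivity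
    have hx1 : ∀ n : ℕ, (1:ℝ) ≤ 3*Real.pi/2 + (n:ℝ)*(2*Real.pi) := by
      intro n
      nlinarith [Real.pi_gt_three, mul_nonneg (Nat.cast_nonneg (α := ℝ) n)
        (by positivity : (0:ℝ) ≤ 2*Real.pi)]
    have hupos : ∀ n, 0 < u n := fun n => Real.rpow_pos_of_pos (hxpos n) _
    have hule : ∀ n, u n ≤ 1 := fun n =>
      Real.rpow_le_one_of_one_le_of_nonpos (hx1 n) (neg_nonpos.mpr (by positivity))
    have huβ : ∀ n, (u n)^β = (3*Real.pi/2 + (n:ℝ)*(2*Real.pi))⁻¹ := by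
      intro n
      show ((3*Real.pi/2 + (n:ℝ)*(2*Real.pi)) ^ (-(1/β)))^β = _
      rw [← Real.rpow_mul (hxpos n).le,
        show (-(1/β))*β = -1 by field_simp,
        Real.rpow_neg (hxpos n).le, Real.rpow_one]
    have hsin : ∀ n, Real.sin (1/(u n)^β) = -1 := by
      intro n
      rw [huβ n, one_div, inv_inv,
        show (3*Real.pi/2 + (n:ℝ)*(2*Real.pi) : ℝ) = (Real.pi/2 + Real.pi) + (n:ℝ)*(2*Real.pi) by ring,
        Real.sin_add_nat_mul_two_pi, Real.sin_add_pi, Real.sin_pi_div_two]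
    have hfu : ∀ n, f (u n) / (u n) = (u n)^(α-1) * (a - 1) := by
      intro n
      rw [hf, if_pos (hupos n), hsin n, Real.rpow_sub (hupos n), Real.rpow_one]
      ring
    have htendu : Tendsto u atTop (𝓝[>] (0:ℝ)) := by
      rw [tendsto_nhdsWithin_iff]
      constructor
      · have hx : Tendsto (fun n : ℕ => 3*Real.pi/2 + (n:ℝ)*(2*Real.pi)) atTop atTop := by
          apply tendsto_atTop_add_const_left
          exact Tendsto.atTop_mul_const (by positivity) tendsto_natCast_atTop_atTop
        exact (tendsto_rpow_neg_atTop (by positivity : 0 < 1/β)).comp hx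
      · exact Filter.Eventually.of_forall fun n => hupos n
    have hfreq : ∃ᶠ t in 𝓝[>] (0:ℝ), ((f t / t : ℝ) : EReal) ≤ ((a - 1 : ℝ) : EReal) := by
      apply htendu.frequently
      apply Frequently.of_forall
      intro n
      apply EReal.coe_le_coe_iff.mpr
      rw [hfu n]
      have h1 : 1 ≤ (u n)^(α-1) :=
        Real.one_le_rpow_of_pos_of_le_one_of_nonpos (hupos n) (hule n) (by linarith)
      nlinarith [h1]
    have hle : liminf (fun t : ℝ => ((f t / t : ℝ) : EReal)) (𝓝[>] (0:ℝ))
        ≤ ((a - 1 : ℝ) : EReal) := liminf_le_of_frequently_le' hfreq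
    apply lt_of_le_of_lt hle
    have : ((a - 1 : ℝ) : EReal) < ((0 : ℝ) : EReal) :=
      EReal.coe_lt_coe_iff.mpr (by linarith)
    simpa using this
end
end

section
/- Let α, β, a be real numbers with α > 1, |α − β| < 1 and 0 < a < 1, and define f : [0,∞) → ℝ by f(t) = t^α (a + sin(t^β)). Then with F(t) = ∫₀^t f(τ) dτ one has: −∞ < liminf_{t→∞} F(t)/t², limsup_{t→∞} F(t)/t² = +∞, and liminf_{t→∞} f(t)/t < 0; that is, f satisfies condition (f_∞). -/
open MeasureTheory Filter Topology ENNReal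

noncomputable section

section AuxStatement16

open intervalIntegral

/-- Oscillation bound via integration by parts. -/
lemma osc_bound16 {α β : ℝ} (hβ : 0 < β) (hab : -1 < α - β) {t : ℝ} (ht : 1 ≤ t) :
    |∫ τ in (1:ℝ)..t, τ ^ α * Real.sin (τ ^ β)| ≤ 3 / β * t ^ (α - β + 1) := by
  set γ := α - β + 1 with hγdef
  have hγ : 0 < γ := by simp only [hγdef]; linarith
  have hβ' : (β:ℝ) ≠ 0 := hβ.ne'
  have htpos : (0:ℝ) < t := lt_of_lt_of_le one_pos ht
  have hmem : ∀ x ∈ Set.uIcc (1:ℝ) t, (0:ℝ) < x := by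
    intro x hx
    rw [Set.uIcc_of_le ht] at hx
    linarith [hx.1]
  have hu : ∀ x ∈ Set.uIcc (1:ℝ) t,
      HasDerivAt (fun x : ℝ => x ^ γ) (γ * x ^ (γ - 1)) x := fun x hx =>
    Real.hasDerivAt_rpow_const (Or.inl (hmem x hx).ne')
  have hv : ∀ x ∈ Set.uIcc (1:ℝ) t,
      HasDerivAt (fun x : ℝ => -Real.cos (x ^ β) / β) (x ^ (β - 1) * Real.sin (x ^ β)) x := by
    intro x hx
    have h1 : HasDerivAt (fun x : ℝ => x ^ β) (β * x ^ (β - 1)) x :=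
      Real.hasDerivAt_rpow_const (Or.inl (hmem x hx).ne')
    have h2 := (Real.hasDerivAt_cos (x ^ β)).comp x h1
    have h3 := h2.neg.div_const β
    refine h3.congr_deriv ?_
    rw [div_eq_iff hβ']
    ring
  have hcontpow : ∀ p : ℝ, ContinuousOn (fun x : ℝ => x ^ p) (Set.uIcc (1:ℝ) t) := by
    intro p x hx
    exact (Real.continuousAt_rpow_const x p (Or.inl (hmem x hx).ne')).continuousWithinAt
  have hu'int : IntervalIntegrable (fun x : ℝ => γ * x ^ (γ - 1)) MeasureTheory.volume 1 t :=
    (continuousOn_const.mul (hcontpow (γ - 1))).intervalIntegrable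
  have hv'int : IntervalIntegrable (fun x : ℝ => x ^ (β - 1) * Real.sin (x ^ β))
      MeasureTheory.volume 1 t :=
    ((hcontpow (β - 1)).mul (Real.continuous_sin.comp_continuousOn
      (hcontpow β))).intervalIntegrable
  have key := intervalIntegral.integral_mul_deriv_eq_deriv_mul hu hv hu'int hv'int
  have hLHS : (∫ τ in (1:ℝ)..t, τ ^ α * Real.sin (τ ^ β))
      = ∫ x in (1:ℝ)..t, x ^ γ * (x ^ (β - 1) * Real.sin (x ^ β)) := by
    apply intervalIntegral.integral_congr
    intro x hx
    have hx0 := hmem x hx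
    have hxx : x ^ γ * x ^ (β - 1) = x ^ α := by
      rw [← Real.rpow_add hx0]
      congr 1
      simp only [hγdef]; ring
    calc x ^ α * Real.sin (x ^ β) = (x ^ γ * x ^ (β - 1)) * Real.sin (x ^ β) := by rw [hxx]
      _ = x ^ γ * (x ^ (β - 1) * Real.sin (x ^ β)) := by ring
  have htγ : (1:ℝ) ≤ t ^ γ := by
    calc (1:ℝ) = (1:ℝ) ^ γ := (Real.one_rpow γ).symm
      _ ≤ t ^ γ := Real.rpow_le_rpow (by norm_num) ht hγ.le
  have htγ0 : (0:ℝ) ≤ t ^ γ := by positivity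
  have hA : |t ^ γ * (-Real.cos (t ^ β) / β)| ≤ t ^ γ / β := by
    rw [abs_mul, abs_div, abs_neg, abs_of_nonneg htγ0, abs_of_pos hβ]
    calc t ^ γ * (|Real.cos (t ^ β)| / β) ≤ t ^ γ * (1 / β) := by
          gcongr
          exact Real.abs_cos_le_one _
      _ = t ^ γ / β := by ring
  have hB : |(1:ℝ) ^ γ * (-Real.cos ((1:ℝ) ^ β) / β)| ≤ 1 / β := by
    rw [Real.one_rpow, one_mul, abs_div, abs_neg, abs_of_pos hβ]
    gcongr
    exact Real.abs_cos_le_one _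
  have hC : |∫ x in (1:ℝ)..t, (γ * x ^ (γ - 1)) * (-Real.cos (x ^ β) / β)|
      ≤ (t ^ γ - 1) / β := by
    have hgint : IntervalIntegrable (fun x : ℝ => γ / β * x ^ (γ - 1))
        MeasureTheory.volume 1 t :=
      (continuousOn_const.mul (hcontpow (γ - 1))).intervalIntegrable
    have hbd : ∀ᵐ x ∂(MeasureTheory.volume.restrict (Set.uIoc (1:ℝ) t)),
        ‖(γ * x ^ (γ - 1)) * (-Real.cos (x ^ β) / β)‖ ≤ γ / β * x ^ (γ - 1) := by
      filter_upwards [MeasureTheory.ae_restrict_mem measurableSet_uIoc] with x hx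
      rw [Set.uIoc_of_le ht] at hx
      have hx0 : (0:ℝ) < x := lt_trans one_pos hx.1
      have hxp : (0:ℝ) ≤ x ^ (γ - 1) := by positivity
      rw [Real.norm_eq_abs, abs_mul, abs_mul, abs_div, abs_neg, abs_of_pos hγ,
        abs_of_nonneg hxp, abs_of_pos hβ]
      calc γ * x ^ (γ - 1) * (|Real.cos (x ^ β)| / β)
          ≤ γ * x ^ (γ - 1) * (1 / β) := by
            gcongr
            exact Real.abs_cos_le_one _
        _ = γ / β * x ^ (γ - 1) := by ring
    have hval : (∫ x in (1:ℝ)..t, γ / β * x ^ (γ - 1)) = (t ^ γ - 1) / β := by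
      rw [intervalIntegral.integral_const_mul, integral_rpow (Or.inl (by linarith))]
      rw [sub_add_cancel, Real.one_rpow]
      field_simp
    calc |∫ x in (1:ℝ)..t, (γ * x ^ (γ - 1)) * (-Real.cos (x ^ β) / β)|
        ≤ |∫ x in (1:ℝ)..t, γ / β * x ^ (γ - 1)| :=
          intervalIntegral.norm_integral_le_abs_of_norm_le hbd hgint
      _ = (t ^ γ - 1) / β := by
          rw [hval, abs_of_nonneg (div_nonneg (by linarith) hβ.le)]
  rw [hLHS, key]
  have e1 := abs_sub (t ^ γ * (-Real.cos (t ^ β) / β) - (1:ℝ) ^ γ * (-Real.cos ((1:ℝ) ^ β) / β))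
    (∫ x in (1:ℝ)..t, (γ * x ^ (γ - 1)) * (-Real.cos (x ^ β) / β))
  have e2 := abs_sub (t ^ γ * (-Real.cos (t ^ β) / β)) ((1:ℝ) ^ γ * (-Real.cos ((1:ℝ) ^ β) / β))
  have hsum : t ^ γ / β + 1 / β + (t ^ γ - 1) / β ≤ 3 / β * t ^ γ := by
    have h1 : t ^ γ / β + 1 / β + (t ^ γ - 1) / β = 2 * t ^ γ / β := by ring
    have h2 : 2 * t ^ γ / β ≤ 3 * t ^ γ / β := by gcongr; linarith
    have h3 : 3 * t ^ γ / β = 3 / β * t ^ γ := by ring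
    linarith
  linarith

/-- The lower bound function for `F(t)/t²` tends to infinity. -/
lemma tendsto_aux16 {α β a c : ℝ} (hα : 1 < α) (hαβ1 : α - β < 1) (hβ : 0 < β) (ha0 : 0 < a) :
    Filter.Tendsto (fun t : ℝ =>
        a / (α + 1) * t ^ (α - 1)
          + ((c - a / (α + 1)) * t ^ ((-2 : ℝ)) - 3 / β * t ^ (α - β - 1)))
      Filter.atTop Filter.atTop := by
  have hα1 : (0:ℝ) < α + 1 := by linarith
  have h1 : Filter.Tendsto (fun t : ℝ => a / (α + 1) * t ^ (α - 1)) Filter.atTop Filter.atTop :=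
    (tendsto_rpow_atTop (by linarith)).const_mul_atTop (by positivity)
  have h2 : Filter.Tendsto (fun t : ℝ => (c - a / (α + 1)) * t ^ ((-2:ℝ)))
      Filter.atTop (nhds ((c - a / (α + 1)) * 0)) :=
    (tendsto_rpow_neg_atTop (by norm_num)).const_mul _
  have h3 : Filter.Tendsto (fun t : ℝ => 3 / β * t ^ (α - β - 1))
      Filter.atTop (nhds (3 / β * 0)) := by
    have : Filter.Tendsto (fun t : ℝ => t ^ (α - β - 1)) Filter.atTop (nhds 0) := by
      have := tendsto_rpow_neg_atTop (y := 1 + β - α) (by linarith)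
      convert this using 2 with t
      congr 1
      ring
    exact this.const_mul _
  exact h1.atTop_add (h2.sub h3)

end AuxStatement16

/-- Remark 1.2(2): `f(t) = t^α (a + sin(t^β))` satisfies `(f_∞)`. -/
theorem statement16
    (α β a : ℝ) (hα : 1 < α) (hαβ : |α - β| < 1) (ha0 : 0 < a) (ha1 : a < 1)
    (f : ℝ → ℝ)
    (hf : ∀ t : ℝ, f t = if 0 < t then t ^ α * (a + Real.sin (t ^ β)) else 0) :
    (⊥ : EReal) <
      liminf (fun t : ℝ => ((primitive f t / t ^ 2 : ℝ) : EReal)) atTop ∧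
    limsup (fun t : ℝ => ((primitive f t / t ^ 2 : ℝ) : EReal)) atTop = ⊤ ∧
    liminf (fun t : ℝ => ((f t / t : ℝ) : EReal)) atTop < 0 := by
  obtain ⟨hαβ1, hαβ2⟩ := abs_lt.mp hαβ
  have hβ : 0 < β := by linarith
  have hα0 : (0:ℝ) < α := by linarith
  -- continuity of f
  have hfeq : f = fun t => (max t 0) ^ α * (a + Real.sin ((max t 0) ^ β)) := by
    funext t
    rw [hf t]
    split_ifs with h
    · rw [max_eq_left h.le]
    · rw [max_eq_right (not_lt.mp h), Real.zero_rpow (ne_of_gt hα0), zero_mul]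
  have hfc : Continuous f := by
    have hm : Continuous (fun t : ℝ => max t 0) := continuous_id.max continuous_const
    have : Continuous (fun t : ℝ => (max t 0) ^ α * (a + Real.sin ((max t 0) ^ β))) :=
      ((Real.continuous_rpow_const hα0.le).comp hm).mul
        (continuous_const.add (Real.continuous_sin.comp
          ((Real.continuous_rpow_const hβ.le).comp hm)))
    rw [hfeq]; exact this
  set c : ℝ := ∫ τ in (0:ℝ)..1, f τ with hc
  -- decomposition of the primitive for t ≥ 1
  have hdecomp : ∀ t : ℝ, 1 ≤ t → primitive f t
      = c + (a * ((t ^ (α + 1) - 1) / (α + 1)) + ∫ τ in (1:ℝ)..t, τ ^ α * Real.sin (τ ^ β)) := by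
    intro t ht
    have hint1 : IntervalIntegrable f MeasureTheory.volume 0 1 := hfc.intervalIntegrable _ _
    have hint2 : IntervalIntegrable f MeasureTheory.volume 1 t := hfc.intervalIntegrable _ _
    have hsplit : primitive f t = c + ∫ τ in (1:ℝ)..t, f τ := by
      rw [hc, primitive, ← intervalIntegral.integral_add_adjacent_intervals hint1 hint2]
    rw [hsplit]
    congr 1
    have heq : Set.EqOn f (fun τ : ℝ => a * τ ^ α + τ ^ α * Real.sin (τ ^ β))
        (Set.uIcc 1 t) := by
      intro τ hτ
      rw [Set.uIcc_of_le ht] at hτ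
      have hτ0 : (0:ℝ) < τ := lt_of_lt_of_le one_pos hτ.1
      rw [hf τ, if_pos hτ0]; ring
    rw [intervalIntegral.integral_congr heq]
    have ia : IntervalIntegrable (fun τ : ℝ => a * τ ^ α) MeasureTheory.volume 1 t :=
      (continuous_const.mul (Real.continuous_rpow_const hα0.le)).intervalIntegrable _ _
    have ib : IntervalIntegrable (fun τ : ℝ => τ ^ α * Real.sin (τ ^ β))
        MeasureTheory.volume 1 t :=
      ((Real.continuous_rpow_const hα0.le).mul
        (Real.continuous_sin.comp (Real.continuous_rpow_const hβ.le))).intervalIntegrable _ _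
    rw [intervalIntegral.integral_add ia ib]
    congr 1
    rw [intervalIntegral.integral_const_mul, integral_rpow (Or.inl (by linarith)),
      Real.one_rpow]
  -- main tendsto
  have hmain : Filter.Tendsto (fun t : ℝ => primitive f t / t ^ 2) Filter.atTop Filter.atTop := by
    apply tendsto_atTop_mono' Filter.atTop _ (tendsto_aux16 (c := c) hα hαβ2 hβ ha0)
    filter_upwards [Filter.eventually_ge_atTop (1:ℝ)] with t ht
    have ht0 : (0:ℝ) < t := lt_of_lt_of_le one_pos ht
    have hT : (0:ℝ) < t ^ 2 := by positivity
    have hosc := osc_bound16 hβ hαβ1 ht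
    have hde := hdecomp t ht
    have hlow : c + a * ((t ^ (α + 1) - 1) / (α + 1)) - 3 / β * t ^ (α - β + 1)
        ≤ primitive f t := by
      rw [hde]
      have := (abs_le.mp hosc).1
      linarith
    have e1 : t ^ (α + 1) = t ^ (α - 1) * t ^ 2 := by
      rw [show α + 1 = (α - 1) + ((2:ℕ):ℝ) by push_cast; ring,
        Real.rpow_add ht0, Real.rpow_natCast]
    have e2 : t ^ (α - β + 1) = t ^ (α - β - 1) * t ^ 2 := by
      rw [show α - β + 1 = (α - β - 1) + ((2:ℕ):ℝ) by push_cast; ring,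
        Real.rpow_add ht0, Real.rpow_natCast]
    have e3 : t ^ ((-2:ℝ)) = (t ^ 2)⁻¹ := by
      rw [show (-2:ℝ) = -((2:ℕ):ℝ) by push_cast; ring,
        Real.rpow_neg ht0.le, Real.rpow_natCast]
    have hα1 : α + 1 ≠ 0 := by positivity
    have hAeq : a / (α + 1) * t ^ (α - 1)
          + ((c - a / (α + 1)) * t ^ ((-2:ℝ)) - 3 / β * t ^ (α - β - 1))
        = (c + a * ((t ^ (α + 1) - 1) / (α + 1)) - 3 / β * t ^ (α - β + 1)) / t ^ 2 := by
      rw [e1, e2, e3]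
      field_simp
      ring
    rw [hAeq]
    gcongr
  have hE : Filter.Tendsto (fun t : ℝ => ((primitive f t / t ^ 2 : ℝ) : EReal))
      Filter.atTop (nhds ⊤) := by
    rw [EReal.tendsto_nhds_top_iff_real]
    intro x
    filter_upwards [hmain.eventually (Filter.eventually_gt_atTop x)] with t ht
    exact_mod_cast ht
  refine ⟨?_, hE.limsup_eq, ?_⟩
  · rw [hE.liminf_eq]; exact bot_lt_top
  -- liminf f(t)/t < 0
  have hle : liminf (fun t : ℝ => ((f t / t : ℝ) : EReal)) atTop ≤ ((-1:ℝ) : EReal) := by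
    apply Filter.liminf_le_of_frequently_le'
    rw [Filter.frequently_atTop]
    intro N
    set M : ℝ := max (max N 1) ((1 - a)⁻¹ ^ (α - 1)⁻¹) with hM
    have hM1 : (1:ℝ) ≤ M := le_trans (le_max_right N 1) (le_max_left _ _)
    have hMN : N ≤ M := le_trans (le_max_left N 1) (le_max_left _ _)
    have hM0 : (0:ℝ) < M := lt_of_lt_of_le one_pos hM1
    set k : ℕ := ⌈M ^ β⌉₊ with hk
    set s : ℝ := (Real.pi / 2 + Real.pi) + (k:ℝ) * (2 * Real.pi) with hs
    have hπ := Real.pi_gt_three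
    have hks : M ^ β ≤ s := by
      have h1 : M ^ β ≤ (k:ℝ) := Nat.le_ceil _
      have hk0 : (0:ℝ) ≤ (k:ℝ) := Nat.cast_nonneg k
      have h2 : (k:ℝ) ≤ (k:ℝ) * (2 * Real.pi) := by nlinarith
      rw [hs]; linarith
    have hMβ : (0:ℝ) < M ^ β := Real.rpow_pos_of_pos hM0 _
    have hs0 : (0:ℝ) < s := lt_of_lt_of_le hMβ hks
    set t0 : ℝ := s ^ β⁻¹ with ht0def
    have ht0pos : (0:ℝ) < t0 := Real.rpow_pos_of_pos hs0 _
    have htβ : t0 ^ β = s := Real.rpow_inv_rpow hs0.le hβ.ne'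
    have hMt : M ≤ t0 := by
      have h := Real.rpow_le_rpow hMβ.le hks (le_of_lt (inv_pos.mpr hβ))
      rwa [Real.rpow_rpow_inv hM0.le hβ.ne'] at h
    refine ⟨t0, le_trans hMN hMt, ?_⟩
    have hsin : Real.sin s = -1 := by
      rw [hs, show ((k:ℝ)) * (2 * Real.pi) = ((k:ℤ):ℝ) * (2 * Real.pi) by push_cast; ring,
        Real.sin_add_int_mul_two_pi, Real.sin_add_pi, Real.sin_pi_div_two]
    have hft : f t0 / t0 = t0 ^ (α - 1) * (a - 1) := by
      rw [hf t0, if_pos ht0pos, htβ, hsin]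
      have hpw : t0 ^ α = t0 ^ (α - 1) * t0 := by
        nth_rewrite 3 [← Real.rpow_one t0]
        rw [← Real.rpow_add ht0pos, sub_add_cancel]
      rw [hpw]
      field_simp
      ring
    have h1a : (0:ℝ) < 1 - a := by linarith
    have hpow : (1 - a)⁻¹ ≤ t0 ^ (α - 1) := by
      have hstep : (1 - a)⁻¹ ^ (α - 1)⁻¹ ≤ t0 := le_trans (le_max_right _ _) hMt
      have h := Real.rpow_le_rpow (by positivity) hstep (by linarith : (0:ℝ) ≤ α - 1)
      rwa [Real.rpow_inv_rpow (by positivity) (ne_of_gt (by linarith : (0:ℝ) < α - 1))]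
        at h
    have hval : f t0 / t0 ≤ -1 := by
      rw [hft]
      have hmul : (1:ℝ) ≤ t0 ^ (α - 1) * (1 - a) := by
        calc (1:ℝ) = (1 - a)⁻¹ * (1 - a) := by field_simp
          _ ≤ t0 ^ (α - 1) * (1 - a) := by gcongr
      nlinarith
    exact_mod_cast hval
  have hlt : ((-1:ℝ) : EReal) < 0 := by exact_mod_cast (by norm_num : (-1:ℝ) < 0)
  exact lt_of_le_of_lt hle hlt
end
end
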